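/- Let v_0, v_1, …, v_z be pairwise distinct points in a pseudometric space with distance d, let Y be a finite set of points containing {v_0, …, v_z}, and let T be a tree on vertex set Y (a connected acyclic simple graph on Y) of total weight W = ∑_{{u,v} ∈ E(T)} d(u,v). Then ∑_{i=1}^{z} min_{0 ≤ j < i} d(v_i, v_j) ≤ ⌈log₂(z+1)⌉ · W. -/

import Mathlib

open Finset

namespace GreedySteiner

variable {α : Type*} [PseudoMetricSpace α] [DecidableEq α]

/-- Finsets of a pseudometric space built by repeated leaf attachment,
together with the total weight of attachment edges. -/
inductive Attachable : Finset α → ℝ → Prop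
  | single (a : α) : Attachable {a} 0
  | attach {s : Finset α} {w : ℝ} (x y : α) (hx : x ∉ s) (hy : y ∈ s)
      (h : Attachable s w) : Attachable (insert x s) (w + dist x y)

lemma Attachable.nonneg {s : Finset α} {w : ℝ} (h : Attachable s w) : 0 ≤ w := by
  induction h with
  | single a => exact le_refl _
  | attach x y hx hy h ih => positivity

lemma Attachable.matching {s : Finset α} {w : ℝ} (h : Attachable s w) :
    ∀ P ⊆ s, Even P.card → ∃ m : α → α,
      (∀ a ∈ P, m a ∈ P ∧ m a ≠ a ∧ m (m a) = a) ∧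
      ∑ a ∈ P, dist a (m a) ≤ 2 * w := by
  induction h with
  | single a =>
    intro P hP hE
    refine ⟨id, ?_, ?_⟩
    · intro b hb
      rcases Finset.subset_singleton_iff.mp hP with rfl | rfl
      · simp at hb
      · simp [Finset.card_singleton, Nat.even_iff] at hE
    · rcases Finset.subset_singleton_iff.mp hP with rfl | rfl
      · simp
      · simp [Finset.card_singleton, Nat.even_iff] at hE
  | attach x y hx hy h ih =>
    rename_i s w
    intro P hP hE
    by_cases hxP : x ∈ P
    · have herase : ∀ a ∈ P.erase x, a ∈ s := by
        intro a ha
        have h1 := Finset.mem_of_mem_erase ha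
        have h2 := Finset.ne_of_mem_erase ha
        rcases Finset.mem_insert.mp (hP h1) with h3 | h3
        · exact absurd h3 h2
        · exact h3
      by_cases hyP : y ∈ P
      · -- both x and y in P : match them and recurse on the rest
        have hxy : x ≠ y := fun hh => hx (hh ▸ hy)
        have hyPx : y ∈ P.erase x := Finset.mem_erase.mpr ⟨hxy.symm, hyP⟩
        have hQs : (P.erase x).erase y ⊆ s :=
          fun a ha => herase a (Finset.mem_of_mem_erase ha)
        have hcard : P.card = ((P.erase x).erase y).card + 2 := by
          have h1 := Finset.card_erase_add_one hyPx
          have h2 := Finset.card_erase_add_one hxP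
          omega
        have hQE : Even ((P.erase x).erase y).card := by
          rcases hE with ⟨k, hk⟩; exact ⟨k - 1, by omega⟩
        obtain ⟨m, hm, hsum⟩ := ih _ hQs hQE
        have hxQ : x ∉ (P.erase x).erase y :=
          fun hxq => (Finset.mem_erase.mp (Finset.mem_of_mem_erase hxq)).1 rfl
        have hyQ : y ∉ (P.erase x).erase y := fun hyq => (Finset.mem_erase.mp hyq).1 rfl
        refine ⟨fun a => if a = x then y else if a = y then x else m a, ?_, ?_⟩
        · intro a ha
          by_cases h1 : a = x
          · subst h1; simp [hxy, hxy.symm, hyP]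
          · by_cases h2 : a = y
            · subst h2; simp [hxy.symm, hxy, hxP]
            · have haQ : a ∈ (P.erase x).erase y :=
                Finset.mem_erase.mpr ⟨h2, Finset.mem_erase.mpr ⟨h1, ha⟩⟩
              obtain ⟨hm1, hm2, hm3⟩ := hm a haQ
              have hmx : m a ≠ x := fun hh => hxQ (hh ▸ hm1)
              have hmy : m a ≠ y := fun hh => hyQ (hh ▸ hm1)
              simp only [h1, h2, if_false, hmx, hmy]
              exact ⟨Finset.mem_of_mem_erase (Finset.mem_of_mem_erase hm1), hm2,
                by simp [hmx, hmy, hm3]⟩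
        · have hPeq : P = insert x (insert y ((P.erase x).erase y)) := by
            rw [Finset.insert_erase hyPx, Finset.insert_erase hxP]
          have hxmem : x ∉ insert y ((P.erase x).erase y) := by
            simp only [Finset.mem_insert]; push_neg; exact ⟨hxy, hxQ⟩
          conv_lhs => rw [hPeq]
          rw [Finset.sum_insert hxmem, Finset.sum_insert hyQ]
          have e1 : ∑ a ∈ (P.erase x).erase y,
                dist a (if a = x then y else if a = y then x else m a)
              = ∑ a ∈ (P.erase x).erase y, dist a (m a) := by
            apply Finset.sum_congr rfl
            intro a ha
            have h1 : a ≠ x := fun hh => hxQ (hh ▸ ha)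
            have h2 : a ≠ y := fun hh => hyQ (hh ▸ ha)
            simp [h1, h2]
          rw [e1]
          have hx1 : (if x = x then y else if x = y then x else m x) = y := by simp
          have hy1 : (if y = x then y else if y = y then x else m y) = x := by
            rw [if_neg hxy.symm, if_pos rfl]
          dsimp only
          rw [hx1, hy1, dist_comm y x]
          linarith [dist_nonneg (x := x) (y := y)]
      · -- x ∈ P, y ∉ P : recurse with y substituted for x
        have hxy : x ≠ y := fun hh => hx (hh ▸ hy)
        have hyPx : y ∉ P.erase x := fun hh => hyP (Finset.mem_of_mem_erase hh)
        have hP's : insert y (P.erase x) ⊆ s := by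
          intro a ha
          rcases Finset.mem_insert.mp ha with rfl | ha'
          · exact hy
          · exact herase a ha'
        have hcard : (insert y (P.erase x)).card = P.card := by
          rw [Finset.card_insert_of_notMem hyPx]
          have h2 := Finset.card_erase_add_one hxP
          omega
        obtain ⟨m, hm, hsum⟩ := ih _ hP's (hcard ▸ hE)
        have hyP' : y ∈ insert y (P.erase x) := Finset.mem_insert_self _ _
        obtain ⟨hb1, hb2, hb3⟩ := hm y hyP'
        -- b := m y
        have hxP' : x ∉ insert y (P.erase x) := by
          simp only [Finset.mem_insert]
          push_neg
          exact ⟨hxy, fun hh => (Finset.mem_erase.mp hh).1 rfl⟩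
        have hbx : m y ≠ x := fun hh => hxP' (hh ▸ hb1)
        have hbP : m y ∈ P.erase x := by
          rcases Finset.mem_insert.mp hb1 with hh | hh
          · exact absurd hh hb2
          · exact hh
        refine ⟨fun a => if a = x then m y else if a = m y then x else m a, ?_, ?_⟩
        · intro a ha
          by_cases h1 : a = x
          · subst h1
            dsimp only
            rw [if_pos rfl]
            refine ⟨Finset.mem_of_mem_erase hbP, hbx, ?_⟩
            rw [if_neg hbx, if_pos rfl]
          · by_cases h2 : a = m y
            · subst h2
              dsimp only
              rw [if_neg hbx, if_pos rfl]
              refine ⟨hxP, fun hh => hbx hh.symm, ?_⟩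
              rw [if_pos rfl]
            · have haP' : a ∈ insert y (P.erase x) :=
                Finset.mem_insert_of_mem (Finset.mem_erase.mpr ⟨h1, ha⟩)
              obtain ⟨hm1, hm2, hm3⟩ := hm a haP'
              have hay : a ≠ y := fun hh => hyP (hh ▸ ha)
              have hmax : m a ≠ x := fun hh => hxP' (hh ▸ hm1)
              have hmay : m a ≠ m y := by
                intro hh
                have := congrArg m hh
                rw [hm3, hb3] at this
                exact hay this
              dsimp only
              rw [if_neg h1, if_neg h2, if_neg hmax, if_neg hmay]
              refine ⟨?_, hm2, hm3⟩
              rcases Finset.mem_insert.mp hm1 with hh | hh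
              · exact absurd (by rw [← hm3, hh] : a = m y) h2
              · exact Finset.mem_of_mem_erase hh
        · -- sum bound
          have hbQ : m y ∈ P.erase x := hbP
          have hby : m y ≠ y := hb2
          -- Q := (P.erase x).erase (m y)
          have hPeq : P = insert x (insert (m y) ((P.erase x).erase (m y))) := by
            rw [Finset.insert_erase hbQ, Finset.insert_erase hxP]
          have hP'eq : insert y (P.erase x)
              = insert y (insert (m y) ((P.erase x).erase (m y))) := by
            rw [Finset.insert_erase hbQ]
          have hxQ : x ∉ insert (m y) ((P.erase x).erase (m y)) := by
            simp only [Finset.mem_insert]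
            push_neg
            refine ⟨fun hh => hbx hh.symm, ?_⟩
            intro hh
            exact (Finset.mem_erase.mp (Finset.mem_of_mem_erase hh)).1 rfl
          have hbQ' : m y ∉ (P.erase x).erase (m y) := fun hh => (Finset.mem_erase.mp hh).1 rfl
          have hyQ' : y ∉ insert (m y) ((P.erase x).erase (m y)) := by
            simp only [Finset.mem_insert]
            push_neg
            exact ⟨fun hh => hby hh.symm,
              fun hh => hyP (Finset.mem_of_mem_erase (Finset.mem_of_mem_erase hh))⟩
          have congrQ : ∀ a ∈ (P.erase x).erase (m y),
              dist a (if a = x then m y else if a = m y then x else m a) = dist a (m a) := by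
            intro a ha
            have h1 : a ≠ x := by
              rintro rfl
              exact hxQ (Finset.mem_insert_of_mem ha)
            have h2 : a ≠ m y := (Finset.mem_erase.mp ha).1
            rw [if_neg h1, if_neg h2]
          have hsum' : ∑ a ∈ insert y (P.erase x), dist a (m a)
              = dist y (m y) + dist (m y) y + ∑ a ∈ (P.erase x).erase (m y), dist a (m a) := by
            rw [hP'eq, Finset.sum_insert hyQ', Finset.sum_insert hbQ', hb3]
            ring
          have hgoal : ∑ a ∈ P,
                dist a (if a = x then m y else if a = m y then x else m a)
              = dist x (m y) + dist (m y) x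
                + ∑ a ∈ (P.erase x).erase (m y), dist a (m a) := by
            conv_lhs => rw [hPeq]
            rw [Finset.sum_insert hxQ, Finset.sum_insert hbQ']
            rw [Finset.sum_congr rfl congrQ]
            have hx1 : (if x = x then m y else if x = m y then x else m x) = m y := by
              rw [if_pos rfl]
            have hb1' : (if m y = x then m y else if m y = m y then x else m (m y)) = x := by
              rw [if_neg hbx, if_pos rfl]
            rw [hx1, hb1']
            ring
          rw [hgoal]
          have t1 : dist x (m y) ≤ dist x y + dist y (m y) := dist_triangle x y (m y)
          have t2 : dist (m y) x = dist x (m y) := dist_comm _ _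
          have t3 : dist (m y) y = dist y (m y) := dist_comm _ _
          rw [hsum'] at hsum
          linarith
    · -- x ∉ P
      have hPs : P ⊆ s := by
        intro a ha
        rcases Finset.mem_insert.mp (hP ha) with h3 | h3
        · exact absurd (h3 ▸ ha) hxP
        · exact h3
      obtain ⟨m, hm, hsum⟩ := ih P hPs hE
      exact ⟨m, hm, by linarith [dist_nonneg (x := x) (y := y)]⟩


section Graph

open SimpleGraph

universe u




lemma mem_edges_getVert_one {V : Type u} {G : SimpleGraph V} {u v : V}
    {p : G.Walk u v} (hp : ¬ p.Nil) : s(u, p.getVert 1) ∈ p.edges := by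
  cases p with
  | nil => simp at hp
  | cons h q =>
    simp [SimpleGraph.Walk.getVert_cons_succ, SimpleGraph.Walk.getVert_zero,
      SimpleGraph.Walk.edges_cons]

lemma not_mem_support_of_degree_one {V : Type u} [Fintype V] [DecidableEq V]
    {G : SimpleGraph V} [DecidableRel G.Adj] {x u v : V}
    (hdeg : G.degree x = 1) (hu : u ≠ x) (hv : v ≠ x)
    {p : G.Walk u v} (hp : p.IsPath) : x ∉ p.support := by
  intro hxs
  have hnil₁ : ¬ (p.takeUntil x hxs).Nil := SimpleGraph.Walk.not_nil_of_ne hu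
  have hnil₂ : ¬ (p.dropUntil x hxs).Nil := SimpleGraph.Walk.not_nil_of_ne (Ne.symm hv)
  have hnil₁' : ¬ (p.takeUntil x hxs).reverse.Nil := SimpleGraph.Walk.not_nil_of_ne (Ne.symm hu)
  have ha : G.Adj x ((p.takeUntil x hxs).reverse.getVert 1) :=
    SimpleGraph.Walk.adj_snd hnil₁'
  have hb : G.Adj x ((p.dropUntil x hxs).getVert 1) :=
    SimpleGraph.Walk.adj_snd hnil₂
  have hab : (p.takeUntil x hxs).reverse.getVert 1 = (p.dropUntil x hxs).getVert 1 := by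
    have h1 : (p.takeUntil x hxs).reverse.getVert 1 ∈ G.neighborFinset x := by
      rw [SimpleGraph.mem_neighborFinset]; exact ha
    have h2 : (p.dropUntil x hxs).getVert 1 ∈ G.neighborFinset x := by
      rw [SimpleGraph.mem_neighborFinset]; exact hb
    exact Finset.card_le_one.mp (le_of_eq hdeg) _ h1 _ h2
  have he1 : s(x, (p.dropUntil x hxs).getVert 1) ∈ (p.takeUntil x hxs).edges := by
    have h3 := mem_edges_getVert_one hnil₁'
    rw [SimpleGraph.Walk.edges_reverse, hab] at h3
    exact List.mem_reverse.mp h3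
  have he2 : s(x, (p.dropUntil x hxs).getVert 1) ∈ (p.dropUntil x hxs).edges :=
    mem_edges_getVert_one hnil₂
  have hnodup : p.edges.Nodup := hp.isTrail.edges_nodup
  rw [← p.take_spec hxs, SimpleGraph.Walk.edges_append, List.nodup_append] at hnodup
  exact hnodup.2.2 _ he1 _ he2 rfl

lemma reachable_induce {V : Type u} {G : SimpleGraph V} {s : Set V} {u v : V}
    (p : G.Walk u v) (hs : ∀ w ∈ p.support, w ∈ s) :
    (G.induce s).Reachable ⟨u, hs u p.start_mem_support⟩ ⟨v, hs v p.end_mem_support⟩ := by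
  induction p with
  | nil => exact SimpleGraph.Reachable.refl _
  | @cons a b c h q ih =>
    have hb : ∀ w ∈ q.support, w ∈ s := fun w hw => hs w (by
      rw [SimpleGraph.Walk.support_cons]; exact List.mem_cons_of_mem _ hw)
    have ha : a ∈ s := hs a (SimpleGraph.Walk.start_mem_support _)
    have hadj : (G.induce s).Adj ⟨a, ha⟩ ⟨b, hb b q.start_mem_support⟩ := h
    exact hadj.reachable.trans (ih hb)

lemma tree_attachable : ∀ (n : ℕ) (V : Type u) [Fintype V] [DecidableEq V]
    (T : SimpleGraph V) [DecidableRel T.Adj] [Fintype T.edgeSet],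
    Fintype.card V = n → T.IsTree → ∀ (f : V → α), Function.Injective f →
    Attachable (Finset.univ.image f)
      (∑ e ∈ T.edgeFinset,
        Sym2.lift ⟨fun u u' => dist (f u) (f u'), fun u u' => dist_comm _ _⟩ e) := by
  intro n
  induction n with
  | zero =>
    intro V _ _ T _ _ hcard hT f hf
    exact ((Fintype.card_eq_zero_iff.mp hcard).false hT.isConnected.nonempty.some).elim
  | succ n ih =>
    intro V _ _ T _ _ hcard hT f hf
    classical
    by_cases hn : n = 0
    · -- single vertex
      subst hn
      obtain ⟨a, hall⟩ := Fintype.card_eq_one_iff.mp hcard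
      have hE : T.edgeFinset = ∅ := by
        ext e
        simp only [Finset.notMem_empty, iff_false, SimpleGraph.mem_edgeFinset]
        induction e with
        | _ b c =>
          rw [SimpleGraph.mem_edgeSet]
          intro hadj
          exact hadj.ne ((hall b).trans (hall c).symm)
      have himg : (Finset.univ : Finset V).image f = {f a} := by
        ext b
        simp only [Finset.mem_image, Finset.mem_univ, true_and, Finset.mem_singleton]
        constructor
        · rintro ⟨c, rfl⟩; rw [hall c]
        · rintro rfl; exact ⟨a, rfl⟩
      rw [hE, himg, Finset.sum_empty]
      exact Attachable.single (f a)
    · -- at least two vertices : find a leaf x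
      have hcard2 : 2 ≤ Fintype.card V := by omega
      have hedge : T.edgeFinset.card + 1 = n + 1 := by
        rw [hT.card_edgeFinset, hcard]
      have hex : ∃ x : V, T.degree x ≤ 1 := by
        by_contra hc
        push_neg at hc
        have hsum : ∑ w : V, T.degree w = 2 * T.edgeFinset.card := by
          rw [T.sum_degrees_eq_twice_card_edges]
          congr!
        have h2 : 2 * Fintype.card V ≤ ∑ w : V, T.degree w := by
          calc 2 * Fintype.card V = ∑ _w : V, 2 := by
                simp [Finset.sum_const, mul_comm]
            _ ≤ ∑ w : V, T.degree w := Finset.sum_le_sum (fun i _ => hc i)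
        omega
      obtain ⟨x, hxdeg⟩ := hex
      have hone : T.degree x = 1 := by
        refine le_antisymm hxdeg ?_
        obtain ⟨z, hz⟩ := Fintype.exists_ne_of_one_lt_card (by omega) x
        obtain ⟨p⟩ := hT.isConnected.preconnected x z
        have hnp : ¬ p.Nil := SimpleGraph.Walk.not_nil_of_ne (Ne.symm hz)
        exact (T.degree_pos_iff_exists_adj x).mpr
          ⟨p.getVert 1, SimpleGraph.Walk.adj_snd hnp⟩
      obtain ⟨y, hy⟩ := Finset.card_eq_one.mp hone
      have hadjxy : T.Adj x y := by
        rw [← SimpleGraph.mem_neighborFinset, hy]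
        exact Finset.mem_singleton_self y
      have hyx : y ≠ x := hadjxy.ne'
      -- the induced graph on the complement of x
      have hcard' : Fintype.card ↥({x}ᶜ : Set V) = n := by
        rw [Fintype.card_compl_set, hcard, Set.card_singleton]
        omega
      have hacyc : (T.induce ({x}ᶜ : Set V)).IsAcyclic := by
        intro w c hc
        have hinj : Function.Injective
            (SimpleGraph.Embedding.induce (G := T) ({x}ᶜ : Set V)).toHom :=
          fun a b hab => Subtype.ext hab
        exact hT.IsAcyclic (c.map (SimpleGraph.Embedding.induce (G := T) ({x}ᶜ : Set V)).toHom) (hc.map hinj)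
      have hconn : (T.induce ({x}ᶜ : Set V)).Connected := by
        rw [SimpleGraph.connected_iff]
        constructor
        · intro a b
          obtain ⟨p, hp, -⟩ := hT.existsUnique_path a.val b.val
          have hxs : x ∉ p.support :=
            not_mem_support_of_degree_one hone
              (Set.mem_compl_singleton_iff.mp a.2) (Set.mem_compl_singleton_iff.mp b.2) hp
          have hall : ∀ w ∈ p.support, w ∈ ({x}ᶜ : Set V) := fun w hw =>
            Set.mem_compl_singleton_iff.mpr (fun hwx => hxs (hwx ▸ hw))
          exact reachable_induce p hall
        · exact ⟨⟨y, Set.mem_compl_singleton_iff.mpr hyx⟩⟩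
      have hT' : (T.induce ({x}ᶜ : Set V)).IsTree := ⟨hconn, hacyc⟩
      have hf' : Function.Injective (fun v : ↥({x}ᶜ : Set V) => f v.val) :=
        hf.comp Subtype.val_injective
      have key := ih ↥({x}ᶜ : Set V) (T.induce ({x}ᶜ : Set V)) hcard' hT' _ hf'
      -- the edge {x,y} and edge set split
      have hxy_mem : s(x, y) ∈ T.edgeFinset := by
        rw [SimpleGraph.mem_edgeFinset]; exact hadjxy
      have hsum_split : ∑ e ∈ T.edgeFinset,
            Sym2.lift ⟨fun u u' => dist (f u) (f u'), fun u u' => dist_comm _ _⟩ e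
          = Sym2.lift ⟨fun u u' => dist (f u) (f u'), fun u u' => dist_comm _ _⟩ s(x, y)
            + ∑ e ∈ T.edgeFinset.erase s(x, y),
              Sym2.lift ⟨fun u u' => dist (f u) (f u'), fun u u' => dist_comm _ _⟩ e :=
        (Finset.add_sum_erase _ _ hxy_mem).symm
      have hbij : ∑ e ∈ (T.induce ({x}ᶜ : Set V)).edgeFinset,
            Sym2.lift ⟨fun u u' => dist ((fun v : ↥({x}ᶜ : Set V) => f v.val) u)
              ((fun v : ↥({x}ᶜ : Set V) => f v.val) u'), fun u u' => dist_comm _ _⟩ e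
          = ∑ e ∈ T.edgeFinset.erase s(x, y),
            Sym2.lift ⟨fun u u' => dist (f u) (f u'), fun u u' => dist_comm _ _⟩ e := by
        refine Finset.sum_bij (fun e _ => Sym2.map Subtype.val e) ?_ ?_ ?_ ?_
        · intro e he
          induction e with
          | _ a b =>
            rw [SimpleGraph.mem_edgeFinset, SimpleGraph.mem_edgeSet] at he
            have hadj : T.Adj a.val b.val := he
            rw [Finset.mem_erase]
            constructor
            · intro hcontra
              rw [Sym2.map_pair_eq, Sym2.eq_iff] at hcontra
              rcases hcontra with ⟨h1, -⟩ | ⟨-, h2⟩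
              · exact Set.mem_compl_singleton_iff.mp a.2 h1
              · exact Set.mem_compl_singleton_iff.mp b.2 h2
            · rw [Sym2.map_pair_eq, SimpleGraph.mem_edgeFinset, SimpleGraph.mem_edgeSet]
              exact hadj
        · intro e1 h1 e2 h2 heq
          exact Sym2.map.injective Subtype.val_injective heq
        · intro e he
          rw [Finset.mem_erase] at he
          obtain ⟨hne, hmem⟩ := he
          rw [SimpleGraph.mem_edgeFinset] at hmem
          induction e with
          | _ a b =>
            rw [SimpleGraph.mem_edgeSet] at hmem
            have hax : a ≠ x := by
              rintro rfl
              have : b ∈ T.neighborFinset a := by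
                rw [SimpleGraph.mem_neighborFinset]; exact hmem
              rw [hy, Finset.mem_singleton] at this
              exact hne (by rw [this])
            have hbx : b ≠ x := by
              rintro rfl
              have : a ∈ T.neighborFinset b := by
                rw [SimpleGraph.mem_neighborFinset]; exact hmem.symm
              rw [hy, Finset.mem_singleton] at this
              exact hne (by rw [this, Sym2.eq_swap])
            refine ⟨s(⟨a, Set.mem_compl_singleton_iff.mpr hax⟩,
              ⟨b, Set.mem_compl_singleton_iff.mpr hbx⟩), ?_, ?_⟩
            · rw [SimpleGraph.mem_edgeFinset, SimpleGraph.mem_edgeSet]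
              exact hmem
            · rw [Sym2.map_pair_eq]
        · intro e he
          induction e with
          | _ a b =>
            dsimp only
            rw [Sym2.map_pair_eq]
            rfl
      have hset : (Finset.univ : Finset V).image f
          = insert (f x) ((Finset.univ : Finset ↥({x}ᶜ : Set V)).image
              (fun v : ↥({x}ᶜ : Set V) => f v.val)) := by
        ext b
        simp only [Finset.mem_image, Finset.mem_insert, Finset.mem_univ, true_and]
        constructor
        · rintro ⟨a, rfl⟩
          by_cases hax : a = x
          · left; rw [hax]
          · right; exact ⟨⟨a, Set.mem_compl_singleton_iff.mpr hax⟩, rfl⟩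
        · rintro (rfl | ⟨a, rfl⟩)
          · exact ⟨x, rfl⟩
          · exact ⟨a.val, rfl⟩
      have hfx_not : f x ∉ (Finset.univ : Finset ↥({x}ᶜ : Set V)).image
          (fun v : ↥({x}ᶜ : Set V) => f v.val) := by
        simp only [Finset.mem_image, Finset.mem_univ, true_and]
        rintro ⟨a, ha⟩
        exact Set.mem_compl_singleton_iff.mp a.2 (hf ha.symm).symm
      have hfy_mem : f y ∈ (Finset.univ : Finset ↥({x}ᶜ : Set V)).image
          (fun v : ↥({x}ᶜ : Set V) => f v.val) := by
        simp only [Finset.mem_image, Finset.mem_univ, true_and]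
        exact ⟨⟨y, Set.mem_compl_singleton_iff.mpr hyx⟩, rfl⟩
      have hlift : Sym2.lift ⟨fun u u' => dist (f u) (f u'), fun u u' => dist_comm _ _⟩ s(x, y)
          = dist (f x) (f y) := rfl
      rw [hset, hsum_split, ← hbij, hlift, add_comm]
      exact Attachable.attach (f x) (f y) hfx_not hfy_mem key

end Graph

lemma exists_half_subset {z : ℕ} {v : ℕ → α} {Y : Finset α} {W : ℝ}
    (hv : ∀ i ≤ z, ∀ j ≤ z, v i = v j → i = j)
    (hY : ∀ i ≤ z, v i ∈ Y)
    (hmatch : ∀ P ⊆ Y, Even P.card → ∃ m : α → α,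
      (∀ a ∈ P, m a ∈ P ∧ m a ≠ a ∧ m (m a) = a) ∧ ∑ a ∈ P, dist a (m a) ≤ 2 * W)
    (c : ℕ → ℝ) (hc : ∀ i j, j < i → i ≤ z → c i ≤ dist (v i) (v j)) :
    ∀ I ⊆ Finset.Icc 1 z, ∃ L ⊆ I, I.card ≤ 2 * L.card ∧ ∑ i ∈ L, c i ≤ W := by
  intro I hI
  classical
  have h0I : (0 : ℕ) ∉ I := fun h => by simpa using hI h
  obtain ⟨J, hIJ, hJz, hJE, hJ0⟩ :
      ∃ J : Finset ℕ, I ⊆ J ∧ (∀ j ∈ J, j ≤ z) ∧ Even J.card ∧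
        (∀ j ∈ J, j ≠ 0 → j ∈ I) := by
    by_cases hEI : Even I.card
    · exact ⟨I, Finset.Subset.refl I, fun j hj => (Finset.mem_Icc.mp (hI hj)).2, hEI,
        fun j hj _ => hj⟩
    · refine ⟨insert 0 I, Finset.subset_insert 0 I, ?_, ?_, ?_⟩
      · intro j hj
        rcases Finset.mem_insert.mp hj with rfl | hj'
        · exact Nat.zero_le z
        · exact (Finset.mem_Icc.mp (hI hj')).2
      · rw [Finset.card_insert_of_notMem h0I]
        exact Nat.even_add_one.mpr hEI
      · intro j hj hj0
        rcases Finset.mem_insert.mp hj with rfl | hj'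
        · exact absurd rfl hj0
        · exact hj'
  have hinjJ : ∀ i ∈ J, ∀ j ∈ J, v i = v j → i = j :=
    fun i hi j hj h => hv i (hJz i hi) j (hJz j hj) h
  have hPY : J.image v ⊆ Y := by
    intro a ha
    rw [Finset.mem_image] at ha
    obtain ⟨j, hj, rfl⟩ := ha
    exact hY j (hJz j hj)
  have hPcard : (J.image v).card = J.card :=
    Finset.card_image_of_injOn (fun i hi j hj h => hinjJ i hi j hj h)
  obtain ⟨m, hm, hmsum⟩ := hmatch (J.image v) hPY (hPcard ▸ hJE)
  set μ : ℕ → ℕ := fun i => if h : ∃ j, j ∈ J ∧ v j = m (v i) then h.choose else 0 with hμdef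
  have hμ_spec : ∀ i ∈ J, μ i ∈ J ∧ v (μ i) = m (v i) := by
    intro i hi
    have hmi : m (v i) ∈ J.image v := (hm (v i) (Finset.mem_image_of_mem v hi)).1
    rw [Finset.mem_image] at hmi
    obtain ⟨j, hj, hvj⟩ := hmi
    have hex : ∃ j, j ∈ J ∧ v j = m (v i) := ⟨j, hj, hvj⟩
    rw [hμdef]
    dsimp only
    rw [dif_pos hex]
    exact ⟨hex.choose_spec.1, hex.choose_spec.2⟩
  have hμJ : ∀ i ∈ J, μ i ∈ J := fun i hi => (hμ_spec i hi).1
  have hμv : ∀ i ∈ J, v (μ i) = m (v i) := fun i hi => (hμ_spec i hi).2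
  have hμne : ∀ i ∈ J, μ i ≠ i := by
    intro i hi h
    have h2 := hμv i hi
    rw [h] at h2
    exact (hm (v i) (Finset.mem_image_of_mem v hi)).2.1 h2.symm
  have hμμ : ∀ i ∈ J, μ (μ i) = i := by
    intro i hi
    have h1 := hμv (μ i) (hμJ i hi)
    rw [hμv i hi, (hm (v i) (Finset.mem_image_of_mem v hi)).2.2] at h1
    exact hinjJ _ (hμJ (μ i) (hμJ i hi)) _ hi h1
  set L := J.filter (fun i => μ i < i) with hLdef
  set K := J.filter (fun i => ¬ μ i < i) with hKdef
  have hLJ : L ⊆ J := Finset.filter_subset _ _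
  have hKJ : K ⊆ J := Finset.filter_subset _ _
  have hKlt : ∀ k ∈ K, k < μ k := by
    intro k hk
    rw [hKdef, Finset.mem_filter] at hk
    exact lt_of_le_of_ne (not_lt.mp hk.2) (Ne.symm (hμne k hk.1))
  have hLlt : ∀ i ∈ L, μ i < i := by
    intro i hi
    rw [hLdef, Finset.mem_filter] at hi
    exact hi.2
  have hcards : L.card + K.card = J.card :=
    Finset.card_filter_add_card_filter_not (p := fun i => μ i < i)
  have hLK : L.card = K.card := by
    refine Finset.card_bij (fun i _ => μ i) ?_ ?_ ?_
    · intro i hi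
      have hiJ : i ∈ J := hLJ hi
      rw [hKdef, Finset.mem_filter]
      refine ⟨hμJ i hiJ, ?_⟩
      rw [hμμ i hiJ]
      exact not_lt.mpr (le_of_lt (hLlt i hi))
    · intro i1 h1 i2 h2 heq
      have := congrArg μ heq
      rwa [hμμ i1 (hLJ h1), hμμ i2 (hLJ h2)] at this
    · intro k hk
      have hkJ : k ∈ K := hk
      have hkJ' : k ∈ J := hKJ hk
      refine ⟨μ k, ?_, hμμ k hkJ'⟩
      rw [hLdef, Finset.mem_filter]
      refine ⟨hμJ k hkJ', ?_⟩
      rw [hμμ k hkJ']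
      exact hKlt k hk
  have hLI : L ⊆ I := by
    intro i hi
    have hiJ : i ∈ J := hLJ hi
    have : μ i < i := hLlt i hi
    exact hJ0 i hiJ (by omega)
  -- the sum bound
  have hsum1 : ∑ a ∈ J.image v, dist a (m a) = ∑ i ∈ J, dist (v i) (v (μ i)) := by
    rw [Finset.sum_image (fun i hi j hj h => hinjJ i hi j hj h)]
    exact Finset.sum_congr rfl (fun i hi => by rw [hμv i hi])
  have hsum2 : ∑ i ∈ J, dist (v i) (v (μ i))
      = ∑ i ∈ L, dist (v i) (v (μ i)) + ∑ i ∈ K, dist (v i) (v (μ i)) :=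
    (Finset.sum_filter_add_sum_filter_not J _ _).symm
  have hsum3 : ∑ i ∈ K, dist (v i) (v (μ i)) = ∑ i ∈ L, dist (v i) (v (μ i)) := by
    refine Finset.sum_bij (fun k _ => μ k) ?_ ?_ ?_ ?_
    · intro k hk
      rw [hLdef, Finset.mem_filter]
      refine ⟨hμJ k (hKJ hk), ?_⟩
      rw [hμμ k (hKJ hk)]
      exact hKlt k hk
    · intro k1 h1 k2 h2 heq
      have := congrArg μ heq
      rwa [hμμ k1 (hKJ h1), hμμ k2 (hKJ h2)] at this
    · intro i hi
      refine ⟨μ i, ?_, hμμ i (hLJ hi)⟩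
      rw [hKdef, Finset.mem_filter]
      refine ⟨hμJ i (hLJ hi), ?_⟩
      rw [hμμ i (hLJ hi)]
      exact not_lt.mpr (le_of_lt (hLlt i hi))
    · intro k hk
      rw [hμμ k (hKJ hk), dist_comm]
  have hcL : ∑ i ∈ L, c i ≤ ∑ i ∈ L, dist (v i) (v (μ i)) := by
    refine Finset.sum_le_sum ?_
    intro i hi
    exact hc i (μ i) (hLlt i hi) (hJz i (hLJ hi))
  refine ⟨L, hLI, ?_, ?_⟩
  · have := Finset.card_le_card hIJ
    omega
  · rw [hsum1, hsum2, hsum3] at hmsum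
    linarith

lemma rec_bound {z : ℕ} {W : ℝ} (c : ℕ → ℝ)
    (hkey : ∀ I ⊆ Finset.Icc 1 z, ∃ L ⊆ I, I.card ≤ 2 * L.card ∧ ∑ i ∈ L, c i ≤ W) :
    ∀ (J : ℕ) (I : Finset ℕ), I ⊆ Finset.Icc 1 z → I.card + 1 ≤ 2 ^ J →
      ∑ i ∈ I, c i ≤ J * W := by
  intro J
  induction J with
  | zero =>
    intro I hI hcard
    have : I = ∅ := Finset.card_eq_zero.mp (by simpa using hcard)
    simp [this]
  | succ J ih =>
    intro I hI hcard
    classical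
    obtain ⟨L, hLI, hhalf, hLsum⟩ := hkey I hI
    have hcard_sdiff : (I \ L).card = I.card - L.card := Finset.card_sdiff_of_subset hLI
    have hLle : L.card ≤ I.card := Finset.card_le_card hLI
    have hpow : 2 ^ (J + 1) = 2 * 2 ^ J := by ring
    have hpos : 1 ≤ 2 ^ J := Nat.one_le_two_pow
    have h2 : (I \ L).card + 1 ≤ 2 ^ J := by omega
    have hIL : I \ L ⊆ Finset.Icc 1 z := fun i hi => hI (Finset.mem_sdiff.mp hi).1
    have hsum := ih (I \ L) hIL h2
    have hsplit : ∑ i ∈ I \ L, c i + ∑ i ∈ L, c i = ∑ i ∈ I, c i :=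
      Finset.sum_sdiff hLI
    rw [← hsplit]
    push_cast
    linarith

end GreedySteiner

/-- **Main theorem (metric form).**  Let `v 0, v 1, …, v z` be pairwise
distinct points of a pseudometric space, let `Y` be a finite set of points
containing them, and let `T` be a tree on vertex set `Y` of total weight
`W = ∑_{{u,v} ∈ E(T)} d(u,v)`.  Then the sum of the greedy connection costs
`∑_{i=1}^{z} min_{0 ≤ j < i} d (v i) (v j)` is at most
`⌈log₂ (z+1)⌉ * W`. -/
theorem greedy_connection_le_log_mul_steiner {α : Type*} [PseudoMetricSpace α]
    (z : ℕ) (v : ℕ → α)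
    (hdist : ∀ i ≤ z, ∀ j ≤ z, i ≠ j → v i ≠ v j)
    (Y : Finset α) (hY : ∀ i ≤ z, v i ∈ Y)
    (T : SimpleGraph {x // x ∈ Y}) (hT : T.IsTree)
    [Fintype T.edgeSet] (W : ℝ)
    (hW : W = ∑ e ∈ T.edgeFinset,
        Sym2.lift ⟨fun (u u' : {x // x ∈ Y}) => dist (u : α) (u' : α),
          fun u u' => dist_comm (u : α) (u' : α)⟩ e) :
    ∑ i ∈ (Finset.Icc 1 z).attach,
        (Finset.range (i : ℕ)).inf'
          (Finset.nonempty_range_iff.mpr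
            (by have := Finset.mem_Icc.mp i.2; omega))
          (fun j => dist (v (i : ℕ)) (v j))
      ≤ (⌈Real.logb 2 ((z : ℝ) + 1)⌉ : ℝ) * W := by
  classical
  set c : ℕ → ℝ := fun i => if h : 0 < i then
      (Finset.range i).inf' (Finset.nonempty_range_iff.mpr (by omega))
        (fun j => dist (v i) (v j)) else 0 with hcdef
  have hLHS : ∑ i ∈ (Finset.Icc 1 z).attach,
        (Finset.range (i : ℕ)).inf'
          (Finset.nonempty_range_iff.mpr
            (by have := Finset.mem_Icc.mp i.2; omega))
          (fun j => dist (v (i : ℕ)) (v j))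
      = ∑ i ∈ Finset.Icc 1 z, c i := by
    rw [← Finset.sum_attach (Finset.Icc 1 z) c]
    refine Finset.sum_congr rfl ?_
    intro i _
    have hi : 0 < (i : ℕ) := by have := Finset.mem_Icc.mp i.2; omega
    rw [hcdef]
    dsimp only
    rw [dif_pos hi]
  have hc : ∀ i j, j < i → i ≤ z → c i ≤ dist (v i) (v j) := by
    intro i j hj hi
    rw [hcdef]
    dsimp only
    rw [dif_pos (by omega : 0 < i)]
    exact Finset.inf'_le _ (Finset.mem_range.mpr hj)
  have hv : ∀ i ≤ z, ∀ j ≤ z, v i = v j → i = j := by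
    intro i hi j hj h
    by_contra hne
    exact hdist i hi j hj hne h
  have hatt : GreedySteiner.Attachable Y W := by
    have h := GreedySteiner.tree_attachable (Fintype.card {x // x ∈ Y}) {x // x ∈ Y}
      T rfl hT Subtype.val Subtype.val_injective
    have himg : (Finset.univ : Finset {x // x ∈ Y}).image Subtype.val = Y := by
      ext a
      simp
    rw [himg] at h
    rw [hW]
    exact h
  have hmatch : ∀ P ⊆ Y, Even P.card → ∃ m : α → α,
      (∀ a ∈ P, m a ∈ P ∧ m a ≠ a ∧ m (m a) = a) ∧ ∑ a ∈ P, dist a (m a) ≤ 2 * W :=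
    fun P hP hE => hatt.matching P hP hE
  have hkey := GreedySteiner.exists_half_subset hv hY hmatch c hc
  have hIcc_card : (Finset.Icc 1 z).card = z := by
    rw [Nat.card_Icc]
    omega
  have hbound := GreedySteiner.rec_bound c hkey (Nat.clog 2 (z + 1)) (Finset.Icc 1 z)
    (Finset.Subset.refl _)
    (by rw [hIcc_card]; exact Nat.le_pow_clog one_lt_two _)
  have hW0 : (0 : ℝ) ≤ W := hatt.nonneg
  have hfin : ((Nat.clog 2 (z + 1) : ℕ) : ℝ) ≤ ((⌈Real.logb 2 ((z : ℝ) + 1)⌉ : ℤ) : ℝ) := by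
    have hlogb0 : (0 : ℝ) ≤ Real.logb 2 ((z : ℝ) + 1) :=
      Real.logb_nonneg one_lt_two (by push_cast; linarith [Nat.cast_nonneg (α := ℝ) z])
    rcases Nat.eq_zero_or_pos (Nat.clog 2 (z + 1)) with h0 | hpos
    · rw [h0]
      have h1 : (0 : ℤ) ≤ ⌈Real.logb 2 ((z : ℝ) + 1)⌉ := Int.ceil_nonneg hlogb0
      exact_mod_cast h1
    · have hz1 : 1 < z + 1 := by
        by_contra hcon
        have hz0 : z = 0 := by omega
        rw [hz0] at hpos
        simp [Nat.clog_one_right] at hpos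
      have hlt : 2 ^ (Nat.clog 2 (z + 1) - 1) < z + 1 :=
        Nat.pow_pred_clog_lt_self one_lt_two hz1
      have hlog : ((Nat.clog 2 (z + 1) - 1 : ℕ) : ℝ) < Real.logb 2 ((z : ℝ) + 1) := by
        have h2 : Real.logb 2 ((2 : ℝ) ^ (Nat.clog 2 (z + 1) - 1 : ℕ))
            < Real.logb 2 ((z : ℝ) + 1) := by
          apply Real.logb_lt_logb one_lt_two (by positivity)
          exact_mod_cast hlt
        rwa [Real.logb_pow, Real.logb_self_eq_one one_lt_two, mul_one] at h2
      have h3 : ((Nat.clog 2 (z + 1) - 1 : ℕ) : ℤ) < ⌈Real.logb 2 ((z : ℝ) + 1)⌉ := by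
        apply Int.lt_ceil.mpr
        exact_mod_cast hlog
      have h4 : ((Nat.clog 2 (z + 1) : ℕ) : ℤ) ≤ ⌈Real.logb 2 ((z : ℝ) + 1)⌉ := by
        have : ((Nat.clog 2 (z + 1) - 1 : ℕ) : ℤ) = (Nat.clog 2 (z + 1) : ℤ) - 1 := by
          push_cast [Nat.cast_sub hpos]
          ring
        omega
      exact_mod_cast h4
  rw [hLHS]
  calc ∑ i ∈ Finset.Icc 1 z, c i ≤ (Nat.clog 2 (z + 1) : ℝ) * W := hbound
    _ ≤ (⌈Real.logb 2 ((z : ℝ) + 1)⌉ : ℝ) * W := mul_le_mul_of_nonneg_right hfin hW0
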